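/- arXiv:2104.03397 — 2 statements merged into one kernel-verified Lean document; each statement's English description precedes it below -/
import Mathlib

section
/- If X follows the von Mises–Fisher distribution on S^k with density proportional to exp(κ xᵀμ) (κ > 0, μ ∈ S^k) with respect to surface measure, then μ is the unique Fréchet mean of X with respect to the intrinsic (angular) distance d(x,y) = arccos(⟨x,y⟩): for every p ∈ S^k with p ≠ μ, E[d(X,p)²] > E[d(X,μ)²]. -/
open MeasureTheory Metric Real
open scoped RealInnerProductSpace Pointwise NNReal ENNReal

section Aux

open Set
open scoped Pointwise

variable {E : Type*} [NormedAddCommGroup E] [InnerProductSpace ℝ E]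
  [FiniteDimensional ℝ E] [MeasurableSpace E] [BorelSpace E]

/-- The induced map on the unit sphere of a linear isometry equivalence. -/
noncomputable def sphereMapLIE (R : E ≃ₗᵢ[ℝ] E) (x : sphere (0 : E) 1) : sphere (0 : E) 1 :=
  ⟨R x, by
    simp [mem_sphere_zero_iff_norm, R.norm_map, mem_sphere_zero_iff_norm.mp x.2]⟩

omit [FiniteDimensional ℝ E] [MeasurableSpace E] [BorelSpace E] in
lemma continuous_sphereMapLIE (R : E ≃ₗᵢ[ℝ] E) : Continuous (sphereMapLIE R) :=
  Continuous.subtype_mk (R.continuous.comp continuous_subtype_val) _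

lemma map_sphereMapLIE_toSphere (R : E ≃ₗᵢ[ℝ] E) :
    Measure.map (sphereMapLIE R) (volume : Measure E).toSphere = (volume : Measure E).toSphere := by
  ext s hs
  rw [Measure.map_apply (continuous_sphereMapLIE R).measurable hs,
    Measure.toSphere_apply' _ (hs.preimage (continuous_sphereMapLIE R).measurable),
    Measure.toSphere_apply' _ hs]
  congr 1
  have hset : Ioo (0:ℝ) 1 • ((↑) '' (sphereMapLIE R ⁻¹' s))
      = R ⁻¹' (Ioo (0:ℝ) 1 • ((↑) '' s)) := by
    ext x
    constructor
    · rintro ⟨r, hr, -, ⟨y, hy, rfl⟩, rfl⟩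
      exact ⟨r, hr, _, ⟨sphereMapLIE R y, hy, rfl⟩, (R.map_smul _ _).symm⟩
    · rintro ⟨r, hr, -, ⟨y, hy, rfl⟩, hx⟩
      have hmem : sphereMapLIE R.symm y ∈ sphereMapLIE R ⁻¹' s := by
        have : sphereMapLIE R (sphereMapLIE R.symm y) = y := by
          simp [sphereMapLIE, Subtype.ext_iff]
        simpa [Set.mem_preimage, this] using hy
      refine ⟨r, hr, _, ⟨sphereMapLIE R.symm y, hmem, rfl⟩, ?_⟩
      apply R.injective
      rw [← hx]
      show R (r • _) = r • (y : E)
      rw [R.map_smul]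
      simp [sphereMapLIE]
  rw [hset]
  exact (LinearIsometryEquiv.measurePreserving R).measure_preimage_emb
    R.toHomeomorph.measurableEmbedding _

lemma integral_comp_sphereMapLIE (R : E ≃ₗᵢ[ℝ] E) {f : sphere (0 : E) 1 → ℝ}
    (hf : AEStronglyMeasurable f (volume : Measure E).toSphere) :
    ∫ x, f (sphereMapLIE R x) ∂(volume : Measure E).toSphere
      = ∫ x, f x ∂(volume : Measure E).toSphere := by
  rw [← MeasureTheory.integral_map (continuous_sphereMapLIE R).measurable.aemeasurable
      (by rwa [map_sphereMapLIE_toSphere]), map_sphereMapLIE_toSphere]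

omit [FiniteDimensional ℝ E] [MeasurableSpace E] [BorelSpace E] in
lemma refl_swap (μ p : sphere (0 : E) 1) :
    Submodule.reflection ((ℝ ∙ ((μ:E) - p))ᗮ) (μ : E) = p := by
  set u : E := (μ:E) - p with hu
  have hμ : ‖(μ:E)‖ = 1 := mem_sphere_zero_iff_norm.mp μ.2
  have hp : ‖(p:E)‖ = 1 := mem_sphere_zero_iff_norm.mp p.2
  have hsum : ((μ:E) + p) ∈ (ℝ ∙ u)ᗮ := by
    rw [Submodule.mem_orthogonal]
    intro v hv
    rw [Submodule.mem_span_singleton] at hv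
    obtain ⟨a, rfl⟩ := hv
    rw [real_inner_smul_left, hu, inner_sub_left, inner_add_right, inner_add_right]
    have h1 : ⟪(μ:E), (μ:E)⟫ = 1 := by
      rw [real_inner_self_eq_norm_sq, hμ]; norm_num
    have h2 : ⟪(p:E), (p:E)⟫ = 1 := by
      rw [real_inner_self_eq_norm_sq, hp]; norm_num
    rw [h1, h2, real_inner_comm (μ:E) (p:E)]
    ring
  have hdiff : u ∈ ((ℝ ∙ u)ᗮ)ᗮ :=
    (Submodule.le_orthogonal_orthogonal _) (Submodule.mem_span_singleton_self u)
  have hdecomp : (μ:E) = (1/2 : ℝ) • ((μ:E) + p) + (1/2 : ℝ) • u := by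
    rw [hu]; module
  rw [hdecomp, map_add, LinearIsometryEquiv.map_smul, LinearIsometryEquiv.map_smul,
    Submodule.reflection_mem_subspace_eq_self hsum,
    Submodule.reflection_mem_subspace_orthogonalComplement_eq_neg hdiff, hu]
  module

end Aux

/-- The location parameter `μ` is the unique Fréchet mean of the von Mises–Fisher
distribution on the sphere `S^k` with respect to the intrinsic angular distance
`d(x,y) = arccos⟪x,y⟫`. -/
theorem vonMisesFisher_frechetMean_intrinsic (k : ℕ) (κ : ℝ) (hκ : 0 < κ)
    (μ : sphere (0 : EuclideanSpace ℝ (Fin (k + 1))) 1) (c : ℝ) (hc : 0 < c)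
    (P : Measure (sphere (0 : EuclideanSpace ℝ (Fin (k + 1))) 1))
    (hP : P = ((volume : Measure (EuclideanSpace ℝ (Fin (k + 1)))).toSphere).withDensity
      (fun x => ENNReal.ofReal (c * Real.exp
        (κ * ⟪(x : EuclideanSpace ℝ (Fin (k + 1))), (μ : EuclideanSpace ℝ (Fin (k + 1)))⟫))))
    (hProb : IsProbabilityMeasure P) :
    ∀ p : sphere (0 : EuclideanSpace ℝ (Fin (k + 1))) 1, p ≠ μ →
      ∫ x, (Real.arccos ⟪(x : EuclideanSpace ℝ (Fin (k + 1))), (μ : EuclideanSpace ℝ (Fin (k + 1)))⟫) ^ 2 ∂P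
        < ∫ x, (Real.arccos ⟪(x : EuclideanSpace ℝ (Fin (k + 1))), (p : EuclideanSpace ℝ (Fin (k + 1)))⟫) ^ 2 ∂P := by
  intro p hpμ
  subst hP
  set E := EuclideanSpace ℝ (Fin (k + 1))
  set σ := (volume : Measure E).toSphere with hσ
  -- the basic functions
  set fμ : sphere (0:E) 1 → ℝ := fun x => c * Real.exp (κ * ⟪(x:E), (μ:E)⟫) with hfμ
  set fp : sphere (0:E) 1 → ℝ := fun x => c * Real.exp (κ * ⟪(x:E), (p:E)⟫) with hfp
  set gμ : sphere (0:E) 1 → ℝ := fun x => (Real.arccos ⟪(x:E), (μ:E)⟫) ^ 2 with hgμ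
  set gp : sphere (0:E) 1 → ℝ := fun x => (Real.arccos ⟪(x:E), (p:E)⟫) ^ 2 with hgp
  have hinnμ : Continuous fun x : sphere (0:E) 1 => ⟪(x:E), (μ:E)⟫ :=
    continuous_subtype_val.inner continuous_const
  have hinnp : Continuous fun x : sphere (0:E) 1 => ⟪(x:E), (p:E)⟫ :=
    continuous_subtype_val.inner continuous_const
  have hfμc : Continuous fμ := continuous_const.mul ((continuous_const.mul hinnμ).rexp)
  have hfpc : Continuous fp := continuous_const.mul ((continuous_const.mul hinnp).rexp)
  have hgμc : Continuous gμ := (Real.continuous_arccos.comp hinnμ).pow 2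
  have hgpc : Continuous gp := (Real.continuous_arccos.comp hinnp).pow 2
  have hfμ0 : ∀ x, 0 ≤ fμ x := fun x => le_of_lt (by positivity)
  -- integrability of continuous functions on the (compact) sphere
  have hint : ∀ {f : sphere (0:E) 1 → ℝ}, Continuous f → Integrable f σ := by
    intro f hf
    exact hf.integrable_of_hasCompactSupport (HasCompactSupport.of_compactSpace f)
  -- Step A: write the integrals w.r.t. `P` as weighted integrals w.r.t. `σ`.
  have keyA : ∀ g : sphere (0:E) 1 → ℝ, Continuous g →
      ∫ x, g x ∂(σ.withDensity fun x => ENNReal.ofReal (fμ x))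
        = ∫ x, fμ x * g x ∂σ := by
    intro g hg
    have hmeas : Measurable fun x : sphere (0:E) 1 => Real.toNNReal (fμ x) :=
      hfμc.measurable.real_toNNReal
    rw [show (fun x : sphere (0:E) 1 => ENNReal.ofReal (fμ x))
        = fun x => ((Real.toNNReal (fμ x) : ℝ≥0) : ℝ≥0∞) from rfl,
      integral_withDensity_eq_integral_smul hmeas g]
    congr 1
    funext x
    rw [NNReal.smul_def, Real.coe_toNNReal _ (hfμ0 x)]
    rfl
  -- Step B: reflection symmetry.
  set R : E ≃ₗᵢ[ℝ] E := Submodule.reflection ((ℝ ∙ ((μ:E) - p))ᗮ) with hR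
  have hRμ : R (μ:E) = p := refl_swap μ p
  have hRp : R (p:E) = μ := by
    rw [← hRμ]; exact Submodule.reflection_reflection _ _
  set R' := sphereMapLIE R with hR'
  have hcoeR' : ∀ x : sphere (0:E) 1, (R' x : E) = R (x : E) := fun x => rfl
  have hswμ : ∀ x : sphere (0:E) 1, ⟪(R' x : E), (μ:E)⟫ = ⟪(x:E), (p:E)⟫ := by
    intro x
    rw [hcoeR', ← hRp, LinearIsometryEquiv.inner_map_map]
  have hswp : ∀ x : sphere (0:E) 1, ⟪(R' x : E), (p:E)⟫ = ⟪(x:E), (μ:E)⟫ := by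
    intro x
    rw [hcoeR', ← hRμ, LinearIsometryEquiv.inner_map_map]
  have hBint : Integrable (fun x => fμ x * gp x) σ := hint (hfμc.mul hgpc)
  have hA : ∫ x, fμ x * gp x ∂σ = ∫ x, fp x * gμ x ∂σ := by
    rw [← integral_comp_sphereMapLIE R (f := fun x => fμ x * gp x) (hfμc.mul hgpc).aestronglyMeasurable]
    congr 1
    funext x
    simp only [hfμ, hfp, hgμ, hgp, ← hR', hswμ x, hswp x]
  have hB : ∫ x, fμ x * gμ x ∂σ = ∫ x, fp x * gp x ∂σ := by
    rw [← integral_comp_sphereMapLIE R (f := fun x => fμ x * gμ x) (hfμc.mul hgμc).aestronglyMeasurable]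
    congr 1
    funext x
    simp only [hfμ, hfp, hgμ, hgp, ← hR', hswμ x, hswp x]
  -- Step C: strict positivity of the symmetrized integrand.
  set h : sphere (0:E) 1 → ℝ := fun x => (gp x - gμ x) * (fμ x - fp x) with hh
  have hbounds : ∀ (x : sphere (0:E) 1) (q : sphere (0:E) 1),
      ⟪(x:E), (q:E)⟫ ∈ Set.Icc (-1:ℝ) 1 := by
    intro x q
    have h1 : |⟪(x:E), (q:E)⟫| ≤ 1 := by
      have := abs_real_inner_le_norm (x:E) (q:E)
      rwa [mem_sphere_zero_iff_norm.mp x.2, mem_sphere_zero_iff_norm.mp q.2,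
        one_mul] at this
    exact abs_le.mp h1
  have hpos : ∀ x : sphere (0:E) 1, ⟪(x:E), (μ:E)⟫ ≠ ⟪(x:E), (p:E)⟫ → 0 < h x := by
    intro x hne
    set a := ⟪(x:E), (μ:E)⟫
    set b := ⟪(x:E), (p:E)⟫
    rcases lt_or_gt_of_ne hne with hab | hab
    · -- a < b : both factors negative
      have hg : gp x < gμ x := by
        have harc : Real.arccos b < Real.arccos a :=
          Real.strictAntiOn_arccos (hbounds x μ) (hbounds x p) hab
        exact pow_lt_pow_left₀ harc (Real.arccos_nonneg b) two_ne_zero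
      have hf : fμ x < fp x := by
        have : Real.exp (κ * a) < Real.exp (κ * b) :=
          Real.exp_lt_exp.mpr (by nlinarith)
        exact mul_lt_mul_of_pos_left this hc
      exact mul_pos_of_neg_of_neg (by simpa using sub_neg.mpr hg) (sub_neg.mpr hf)
    · -- b < a : both factors positive
      have hg : gμ x < gp x := by
        have harc : Real.arccos a < Real.arccos b :=
          Real.strictAntiOn_arccos (hbounds x p) (hbounds x μ) hab
        exact pow_lt_pow_left₀ harc (Real.arccos_nonneg a) two_ne_zero
      have hf : fp x < fμ x := by
        have : Real.exp (κ * b) < Real.exp (κ * a) :=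
          Real.exp_lt_exp.mpr (by nlinarith)
        exact mul_lt_mul_of_pos_left this hc
      exact mul_pos (sub_pos.mpr hg) (sub_pos.mpr hf)
  have hnn : ∀ x, 0 ≤ h x := by
    intro x
    by_cases hne : ⟪(x:E), (μ:E)⟫ = ⟪(x:E), (p:E)⟫
    · simp [hh, hfμ, hfp, hne]
    · exact le_of_lt (hpos x hne)
  -- the set where the inner products differ has positive measure
  set W : Set (sphere (0:E) 1) := {x | ⟪(x:E), (μ:E)⟫ ≠ ⟪(x:E), (p:E)⟫} with hW
  have hu0 : (μ:E) - p ≠ 0 := sub_ne_zero.mpr (fun hh => hpμ.symm (Subtype.ext hh))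
  have hWc : σ Wᶜ = 0 := by
    have hWcs : Wᶜ = {x : sphere (0:E) 1 | ⟪(μ:E) - p, (x:E)⟫ = 0} := by
      ext x
      simp only [Set.mem_compl_iff, hW, Set.mem_setOf_eq, not_not, inner_sub_left]
      have hcomm : ∀ a b : E, ⟪a, b⟫ = ⟪b, a⟫ := fun a b => real_inner_comm b a
      constructor
      · intro hxx
        rw [hcomm (μ:E) (x:E), hcomm (p:E) (x:E), hxx, sub_self]
      · intro hxx
        have h0 := sub_eq_zero.mp hxx
        rw [hcomm (x:E) (μ:E), hcomm (x:E) (p:E)]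
        exact h0
    have hmeas : MeasurableSet Wᶜ := by
      rw [hWcs]
      exact measurableSet_eq_fun
        ((continuous_const.inner continuous_subtype_val).measurable) measurable_const
    rw [hσ, Measure.toSphere_apply' _ hmeas]
    have hsub : (Set.Ioo (0:ℝ) 1 • (Subtype.val '' Wᶜ) : Set E)
        ⊆ ((ℝ ∙ ((μ:E) - p))ᗮ : Submodule ℝ E) := by
      rintro y ⟨r, hr, -, ⟨z, hz, rfl⟩, rfl⟩
      refine Submodule.smul_mem _ r ?_
      rw [Submodule.mem_orthogonal]
      intro v hv
      rw [Submodule.mem_span_singleton] at hv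
      obtain ⟨aa, rfl⟩ := hv
      rw [real_inner_smul_left]
      rw [hWcs] at hz
      rw [hz, mul_zero]
    have hvol : volume (((ℝ ∙ ((μ:E) - p))ᗮ : Submodule ℝ E) : Set E) = 0 := by
      apply Measure.addHaar_submodule
      intro htop
      have : (μ:E) - p ∈ (ℝ ∙ ((μ:E) - p))ᗮ := htop ▸ Submodule.mem_top
      rw [Submodule.mem_orthogonal] at this
      have h0 := this _ (Submodule.mem_span_singleton_self _)
      exact hu0 (inner_self_eq_zero.mp h0)
    rw [measure_mono_null hsub hvol, mul_zero]
  have hWpos : 0 < σ W := by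
    have huniv : σ Set.univ ≤ σ Wᶜ + σ W := by
      rw [← Set.compl_union_self W]
      exact measure_union_le _ _
    rw [hWc, zero_add] at huniv
    refine lt_of_lt_of_le ?_ huniv
    rw [hσ, Measure.toSphere_apply_univ]
    have hball : 0 < volume (ball (0:E) 1) := measure_ball_pos volume 0 one_pos
    have hdim : (0:ENNReal) < (Module.finrank ℝ E : ENNReal) := by
      have : 0 < Module.finrank ℝ E := Module.finrank_pos
      exact_mod_cast this
    exact ENNReal.mul_pos hdim.ne' hball.ne'
  have hWsub : W ⊆ Function.support h := fun x hx => (hpos x hx).ne'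
  have hIpos : 0 < ∫ x, h x ∂σ := by
    rw [integral_pos_iff_support_of_nonneg hnn (hint (((hgpc.sub hgμc)).mul (hfμc.sub hfpc)))]
    exact lt_of_lt_of_le hWpos (measure_mono hWsub)
  -- Step D: algebra
  have hexp : ∫ x, h x ∂σ
      = ((∫ x, fμ x * gp x ∂σ) - (∫ x, fp x * gp x ∂σ))
        - ((∫ x, fμ x * gμ x ∂σ) - (∫ x, fp x * gμ x ∂σ)) := by
    calc ∫ x, h x ∂σ
        = ∫ x, ((fμ x * gp x - fp x * gp x) - (fμ x * gμ x - fp x * gμ x)) ∂σ := by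
          congr 1
          funext x
          simp only [hh]
          ring
      _ = (∫ x, (fμ x * gp x - fp x * gp x) ∂σ)
            - ∫ x, (fμ x * gμ x - fp x * gμ x) ∂σ :=
          integral_sub ((hint (hfμc.mul hgpc)).sub (hint (hfpc.mul hgpc)))
            ((hint (hfμc.mul hgμc)).sub (hint (hfpc.mul hgμc)))
      _ = ((∫ x, fμ x * gp x ∂σ) - (∫ x, fp x * gp x ∂σ))
            - ((∫ x, fμ x * gμ x ∂σ) - (∫ x, fp x * gμ x ∂σ)) := by
          rw [integral_sub (hint (f := fun x => fμ x * gp x) (hfμc.mul hgpc))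
              (hint (f := fun x => fp x * gp x) (hfpc.mul hgpc)),
            integral_sub (hint (f := fun x => fμ x * gμ x) (hfμc.mul hgμc))
              (hint (f := fun x => fp x * gμ x) (hfpc.mul hgμc))]
  rw [keyA _ hgμc, keyA _ hgpc]
  have hAB : (∫ x, fμ x * gμ x ∂σ) < ∫ x, fμ x * gp x ∂σ := by
    have h2 : ∫ x, h x ∂σ
        = 2 * ((∫ x, fμ x * gp x ∂σ) - (∫ x, fμ x * gμ x ∂σ)) := by
      rw [hexp, ← hA, ← hB]; ring
    nlinarith [hIpos]
  exact hAB
end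

section
/- Let X be distributed according to the hyperboloid (hyperbolic von Mises–Fisher) distribution on H^k = {x ∈ ℝ^{k+1} : (x,x) = −1, x_{k+1} > 0}, with density proportional to exp(κ(x,μ)) with respect to the invariant volume measure, where (x,y) = Σ_{i=1}^k xᵢyᵢ − x_{k+1}y_{k+1} is the Minkowski form, μ ∈ H^k, and κ > 0. Then E[d(X,p)²] > E[d(X,μ)²] for all p ∈ H^k with p ≠ μ, where d(x,y) = arcosh(−(x,y)) is the hyperbolic distance; i.e., μ is the unique Fréchet mean. -/
open MeasureTheory

/-- The Minkowski pseudo-inner product on `ℝ^{k+1}`. -/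
def mink {k : ℕ} (x y : Fin (k + 1) → ℝ) : ℝ :=
  (∑ i : Fin k, x i.castSucc * y i.castSucc) - x (Fin.last k) * y (Fin.last k)

/-- The hyperboloid model `H^k` of hyperbolic space. -/
def hyperboloid (k : ℕ) : Set (Fin (k + 1) → ℝ) :=
  {x | mink x x = -1 ∧ 0 < x (Fin.last k)}

/-- The hyperbolic distance `d(x,y) = arcosh(−(x,y))` on the hyperboloid, where
`arcosh t = log (t + √(t² − 1))`. -/
noncomputable def hypDist {k : ℕ} (x y : Fin (k + 1) → ℝ) : ℝ :=
  Real.log (-(mink x y) + Real.sqrt ((-(mink x y)) ^ 2 - 1))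

noncomputable def phi (t : ℝ) : ℝ := Real.log (t + Real.sqrt (t^2 - 1))

lemma phi_inner_one_le {t : ℝ} (ht : 1 ≤ t) : 1 ≤ t + Real.sqrt (t^2 - 1) := by
  have := Real.sqrt_nonneg (t^2 - 1); linarith

lemma phi_nonneg {t : ℝ} (ht : 1 ≤ t) : 0 ≤ phi t :=
  Real.log_nonneg (phi_inner_one_le ht)

lemma phi_mono {a b : ℝ} (ha : 1 ≤ a) (hab : a ≤ b) : phi a ≤ phi b := by
  unfold phi
  have h1 : Real.sqrt (a^2 - 1) ≤ Real.sqrt (b^2 - 1) :=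
    Real.sqrt_le_sqrt (by nlinarith)
  exact Real.log_le_log (by linarith [phi_inner_one_le ha]) (by linarith)

lemma phi_strictMono {a b : ℝ} (ha : 1 ≤ a) (hab : a < b) : phi a < phi b := by
  unfold phi
  have h1 : Real.sqrt (a^2 - 1) ≤ Real.sqrt (b^2 - 1) :=
    Real.sqrt_le_sqrt (by nlinarith)
  exact Real.log_lt_log (by linarith [phi_inner_one_le ha]) (by linarith)

lemma phi_le_two_mul {t : ℝ} (ht : 1 ≤ t) : phi t ≤ 2 * t := by
  unfold phi
  have h1 : Real.sqrt (t^2 - 1) ≤ t := by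
    have : Real.sqrt (t^2 - 1) ≤ Real.sqrt (t^2) := Real.sqrt_le_sqrt (by linarith)
    rwa [Real.sqrt_sq (by linarith)] at this
  calc Real.log (t + Real.sqrt (t^2-1)) ≤ (t + Real.sqrt (t^2-1)) - 1 :=
        Real.log_le_sub_one_of_pos (by linarith [phi_inner_one_le ht])
    _ ≤ 2 * t := by linarith

lemma sq_div_four_le_exp {z : ℝ} (hz : 0 ≤ z) : (z/2)^2 ≤ Real.exp z := by
  have h1 : z/2 ≤ Real.exp (z/2) := by linarith [Real.add_one_le_exp (z/2)]
  have h2 : (z/2)^2 ≤ (Real.exp (z/2))^2 := by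
    apply pow_le_pow_left₀ (by linarith) h1 2
  calc (z/2)^2 ≤ (Real.exp (z/2))^2 := h2
    _ = Real.exp z := by rw [sq, ← Real.exp_add]; ring_nf


lemma mink_symm {k : ℕ} (x y : Fin (k + 1) → ℝ) : mink x y = mink y x := by
  unfold mink
  congr 1
  · exact Finset.sum_congr rfl fun i _ => mul_comm _ _
  · ring

lemma mink_sub_smul_left {k : ℕ} (x u y : Fin (k + 1) → ℝ) (r : ℝ) :
    mink (x - r • u) y = mink x y - r * mink u y := by
  unfold mink
  simp only [Pi.sub_apply, Pi.smul_apply, smul_eq_mul, sub_mul, Finset.sum_sub_distrib,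
    Finset.mul_sum]
  ring_nf
  rw [Finset.mul_sum]
  ring_nf

lemma mink_neg_left {k : ℕ} (x y : Fin (k + 1) → ℝ) : mink (-x) y = - mink x y := by
  unfold mink
  simp only [Pi.neg_apply, neg_mul, Finset.sum_neg_distrib]
  ring

lemma measurable_mink {k : ℕ} (y : Fin (k + 1) → ℝ) :
    Measurable (fun x : Fin (k+1) → ℝ => mink x y) := by
  unfold mink
  refine Measurable.sub ?_ ?_
  · exact Finset.measurable_sum _ fun i _ => (measurable_pi_apply _).mul_const _
  · exact (measurable_pi_apply _).mul_const _




lemma hyp_last_one_le {k : ℕ} {x : Fin (k+1) → ℝ} (hx : x ∈ hyperboloid k) :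
    1 ≤ x (Fin.last k) := by
  obtain ⟨h1, h2⟩ := hx
  unfold mink at h1
  have hs : 0 ≤ ∑ i : Fin k, x i.castSucc * x i.castSucc :=
    Finset.sum_nonneg fun i _ => mul_self_nonneg _
  nlinarith

lemma mink_le_neg_one {k : ℕ} {x y : Fin (k+1) → ℝ} (hx : x ∈ hyperboloid k)
    (hy : y ∈ hyperboloid k) : mink x y ≤ -1 := by
  have ha := hyp_last_one_le hx
  have hb := hyp_last_one_le hy
  obtain ⟨hx1, _⟩ := hx
  obtain ⟨hy1, _⟩ := hy
  have hcs := Finset.sum_mul_sq_le_sq_mul_sq Finset.univ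
    (fun i : Fin k => x i.castSucc) (fun i : Fin k => y i.castSucc)
  unfold mink at hx1 hy1 ⊢
  set a := x (Fin.last k)
  set b := y (Fin.last k)
  have hx2 : ∑ i : Fin k, x i.castSucc ^ 2 = a^2 - 1 := by
    have : ∑ i : Fin k, x i.castSucc * x i.castSucc = a * a - 1 := by linarith
    simpa [pow_two] using this
  have hy2 : ∑ i : Fin k, y i.castSucc ^ 2 = b^2 - 1 := by
    have : ∑ i : Fin k, y i.castSucc * y i.castSucc = b * b - 1 := by linarith
    simpa [pow_two] using this
  rw [hx2, hy2] at hcs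
  have hab1 : 1 ≤ a * b := by nlinarith
  have h2 : (∑ i : Fin k, x i.castSucc * y i.castSucc)^2 ≤ (a*b - 1)^2 := by
    nlinarith [sq_nonneg (a - b)]
  nlinarith [hab1, h2]

lemma mink_eq_neg_one_iff {k : ℕ} {x y : Fin (k+1) → ℝ} (hx : x ∈ hyperboloid k)
    (hy : y ∈ hyperboloid k) (h : mink x y = -1) : x = y := by
  have ha := hyp_last_one_le hx
  have hb := hyp_last_one_le hy
  obtain ⟨hx1, _⟩ := hx
  obtain ⟨hy1, _⟩ := hy
  have hcs := Finset.sum_mul_sq_le_sq_mul_sq Finset.univ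
    (fun i : Fin k => x i.castSucc) (fun i : Fin k => y i.castSucc)
  unfold mink at hx1 hy1 h
  set a := x (Fin.last k)
  set b := y (Fin.last k)
  set S := ∑ i : Fin k, x i.castSucc * y i.castSucc with hS
  have hx2 : ∑ i : Fin k, x i.castSucc ^ 2 = a^2 - 1 := by
    have : ∑ i : Fin k, x i.castSucc * x i.castSucc = a * a - 1 := by linarith
    simpa [pow_two] using this
  have hy2 : ∑ i : Fin k, y i.castSucc ^ 2 = b^2 - 1 := by
    have : ∑ i : Fin k, y i.castSucc * y i.castSucc = b * b - 1 := by linarith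
    simpa [pow_two] using this
  rw [hx2, hy2] at hcs
  have hSab : S = a * b - 1 := by linarith
  have hab : a = b := by nlinarith [sq_nonneg (a - b)]
  have hsum0 : ∑ i : Fin k, (x i.castSucc - y i.castSucc)^2 = 0 := by
    have : ∑ i : Fin k, (x i.castSucc - y i.castSucc)^2
        = (∑ i : Fin k, x i.castSucc ^ 2) + (∑ i : Fin k, y i.castSucc ^2) - 2 * S := by
      rw [hS, Finset.mul_sum, ← Finset.sum_add_distrib, ← Finset.sum_sub_distrib]
      exact Finset.sum_congr rfl fun i _ => by ring
    rw [this, hx2, hy2, hSab, hab]; ring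
  have hzero : ∀ i : Fin k, (x i.castSucc - y i.castSucc)^2 = 0 := by
    intro i
    have := (Finset.sum_eq_zero_iff_of_nonneg (fun i _ => sq_nonneg
      (x i.castSucc - y i.castSucc))).mp hsum0 i (Finset.mem_univ i)
    exact this
  funext j
  induction j using Fin.lastCases with
  | last => exact hab
  | cast i =>
      have := hzero i
      have := sq_eq_zero_iff.mp this
      linarith

lemma mink_lt_neg_one {k : ℕ} {x y : Fin (k+1) → ℝ} (hx : x ∈ hyperboloid k)
    (hy : y ∈ hyperboloid k) (hne : x ≠ y) : mink x y < -1 :=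
  lt_of_le_of_ne (mink_le_neg_one hx hy) (fun h => hne (mink_eq_neg_one_iff hx hy h))

lemma sign_lemma {k : ℕ} {x z : Fin (k+1) → ℝ} (hx : x ∈ hyperboloid k)
    (hz : mink z z = -1) (hxz : mink x z < 0) : 0 < z (Fin.last k) := by
  by_contra hle
  push_neg at hle
  have h1 : mink z z = -1 := hz
  unfold mink at h1
  have hs : 0 ≤ ∑ i : Fin k, z i.castSucc * z i.castSucc :=
    Finset.sum_nonneg fun i _ => mul_self_nonneg _
  have hzl : z (Fin.last k) ≤ -1 := by nlinarith
  have hneg : (-z) ∈ hyperboloid k := by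
    constructor
    · rw [mink_neg_left, mink_symm, mink_neg_left, mink_symm, hz]; ring
    · simp only [Pi.neg_apply]; linarith
  have := mink_le_neg_one hx hneg
  rw [mink_symm, mink_neg_left, mink_symm] at this
  linarith

/-- Reflection in the Minkowski-orthogonal complement of `u`. -/
noncomputable def mrefl {k : ℕ} (u : Fin (k+1) → ℝ) (y : Fin (k+1) → ℝ) : Fin (k+1) → ℝ :=
  y - (2 * mink y u / mink u u) • u

lemma mink_sub_smul_right {k : ℕ} (x u y : Fin (k + 1) → ℝ) (r : ℝ) :
    mink y (x - r • u) = mink y x - r * mink y u := by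
  rw [mink_symm, mink_sub_smul_left, mink_symm x y, mink_symm u y]

lemma mrefl_mink {k : ℕ} {u : Fin (k+1) → ℝ} (hu : mink u u ≠ 0) (x y : Fin (k+1) → ℝ) :
    mink (mrefl u x) (mrefl u y) = mink x y := by
  unfold mrefl
  rw [mink_sub_smul_left, mink_sub_smul_right, mink_sub_smul_right, mink_symm u y]
  field_simp
  ring

lemma mrefl_adj {k : ℕ} {u : Fin (k+1) → ℝ} (x y : Fin (k+1) → ℝ) :
    mink (mrefl u x) y = mink x (mrefl u y) := by
  unfold mrefl
  rw [mink_sub_smul_left, mink_sub_smul_right, mink_symm u y]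
  ring

lemma measurable_mrefl {k : ℕ} (u : Fin (k+1) → ℝ) : Measurable (mrefl u) := by
  unfold mrefl
  refine measurable_pi_lambda _ fun j => ?_
  have : (fun y : Fin (k+1) → ℝ => (y - (2 * mink y u / mink u u) • u) j)
      = fun y => y j - (2 * mink y u / mink u u) * u j := by
    funext y; simp [Pi.sub_apply, Pi.smul_apply, smul_eq_mul]
  rw [this]
  exact (measurable_pi_apply j).sub
    ((((measurable_mink u).const_mul 2).div_const _).mul_const _)

lemma mrefl_mapsTo {k : ℕ} {u : Fin (k+1) → ℝ} (hu : 0 < mink u u) :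
    Set.MapsTo (mrefl u) (hyperboloid k) (hyperboloid k) := by
  intro y hy
  have h1 : mink (mrefl u y) (mrefl u y) = -1 := by
    rw [mrefl_mink (ne_of_gt hu)]; exact hy.1
  refine ⟨h1, ?_⟩
  refine sign_lemma hy h1 ?_
  unfold mrefl
  rw [mink_sub_smul_right]
  have h2 : mink y u * mink y u / mink u u ≥ 0 :=
    div_nonneg (mul_self_nonneg _) hu.le
  have := hy.1
  have h3 : 2 * mink y u / mink u u * mink y u = 2 * (mink y u * mink y u / mink u u) := by
    ring
  rw [h3, this]
  linarith

lemma mrefl_swap {k : ℕ} {a b : Fin (k+1) → ℝ} (ha : mink a a = -1) (hb : mink b b = -1)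
    (hab : mink a b ≠ -1) : mrefl (a - b) a = b ∧ mrefl (a - b) b = a := by
  have hvv : mink (a - b) (a - b) = -2 - 2 * mink a b := by
    have h1 : a - b = a - (1:ℝ) • b := by simp
    rw [h1, mink_sub_smul_left, mink_sub_smul_right, mink_sub_smul_right, ha, hb,
      mink_symm b a]
    ring
  have hv0 : mink (a - b) (a - b) ≠ 0 := by
    rw [hvv]; intro h; apply hab; linarith
  constructor
  · unfold mrefl
    have hav : mink a (a - b) = -1 - mink a b := by
      have h1 : a - b = a - (1:ℝ) • b := by simp
      rw [h1, mink_sub_smul_right, ha]; ring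
    rw [hav, hvv]
    have : 2 * (-1 - mink a b) / (-2 - 2 * mink a b) = 1 := by
      rw [div_eq_one_iff_eq]
      · ring
      · intro h; apply hab; linarith
    rw [this, one_smul]
    abel
  · unfold mrefl
    have hbv : mink b (a - b) = mink a b + 1 := by
      have h1 : a - b = a - (1:ℝ) • b := by simp
      rw [h1, mink_sub_smul_right, hb, mink_symm b a]; ring
    rw [hbv, hvv]
    have hne : (-2 - 2 * mink a b) ≠ 0 := by
      intro h; apply hab; linarith
    have h4 : 2 * (mink a b + 1) / (-2 - 2 * mink a b) = -1 := by
      rw [div_eq_iff hne]; ring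
    rw [h4, neg_one_smul]
    abel

noncomputable def ePoint (k : ℕ) : Fin (k+1) → ℝ := Fin.snoc 0 1

lemma ePoint_mem (k : ℕ) : ePoint k ∈ hyperboloid k := by
  constructor
  · unfold mink ePoint
    simp [Fin.snoc_castSucc, Fin.snoc_last]
  · unfold ePoint
    simp [Fin.snoc_last]

lemma mink_ePoint {k : ℕ} (x : Fin (k+1) → ℝ) : mink x (ePoint k) = - x (Fin.last k) := by
  unfold mink ePoint
  simp [Fin.snoc_castSucc, Fin.snoc_last]

lemma net_exists (k : ℕ) : ∃ Q : Finset (Fin (k+1) → ℝ),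
    (∀ q ∈ Q, q ∈ hyperboloid k) ∧
    ∀ x ∈ hyperboloid k, ∃ q ∈ Q, -mink x q ≤ 3/4 * x (Fin.last k) + 2 := by
  classical
  set Sp : Set (Fin k → ℝ) := {v | ∑ i, v i^2 = 1} with hSp
  have hclosed : IsClosed Sp := by
    have : Continuous (fun v : Fin k → ℝ => ∑ i, v i ^2) := by
      continuity
    exact isClosed_eq this continuous_const
  have hbdd : Bornology.IsBounded Sp := by
    apply Bornology.IsBounded.subset (Metric.isBounded_closedBall (x := (0 : Fin k → ℝ)) (r := 1))
    intro v hv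
    simp only [Metric.mem_closedBall, dist_zero_right]
    rw [pi_norm_le_iff_of_nonneg (by norm_num)]
    intro i
    have h1 : v i ^ 2 ≤ 1 := by
      rw [← hv]
      exact Finset.single_le_sum (f := fun i => v i ^2) (fun j _ => sq_nonneg _)
        (Finset.mem_univ i)
    rw [Real.norm_eq_abs, abs_le]
    constructor <;> nlinarith
  have hK : IsCompact Sp := Metric.isCompact_of_isClosed_isBounded hclosed hbdd
  set U : Sp → Set (Fin k → ℝ) := fun ω => {v | ∑ i, (v i - (ω : Fin k → ℝ) i)^2 < 1/4}
    with hU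
  have hopen : ∀ ω, IsOpen (U ω) := by
    intro ω
    have : Continuous (fun v : Fin k → ℝ => ∑ i, (v i - (ω : Fin k → ℝ) i) ^2) := by
      continuity
    exact isOpen_lt this continuous_const
  have hcover : Sp ⊆ ⋃ ω, U ω := by
    intro v hv
    exact Set.mem_iUnion.mpr ⟨⟨v, hv⟩, by simp [hU]⟩
  obtain ⟨t, ht⟩ := hK.elim_finite_subcover U hopen hcover
  set Q : Finset (Fin (k+1) → ℝ) :=
    insert (ePoint k) (t.image fun ω : ↥Sp => Fin.snoc (ω : Fin k → ℝ) (Real.sqrt 2)) with hQ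
  refine ⟨Q, ?_, ?_⟩
  · intro q hq
    rw [hQ, Finset.mem_insert] at hq
    rcases hq with h | h
    · rw [h]; exact ePoint_mem k
    · obtain ⟨ω, hω, rfl⟩ := Finset.mem_image.mp h
      have hω2 : ∑ i, (ω : Fin k → ℝ) i ^2 = 1 := ω.2
      constructor
      · show mink _ _ = -1
        unfold mink
        simp only [Fin.snoc_castSucc, Fin.snoc_last]
        have h2 : Real.sqrt 2 * Real.sqrt 2 = 2 := Real.mul_self_sqrt (by norm_num)
        have h3 : ∑ i : Fin k, (ω : Fin k → ℝ) i * (ω : Fin k → ℝ) i = 1 := by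
          rw [← hω2]; exact Finset.sum_congr rfl fun i _ => (sq ((ω : Fin k → ℝ) i)).symm
        rw [h2, h3]; norm_num
      · show (0:ℝ) < _
        simp only [Fin.snoc_last]
        positivity
  · intro x hx
    have ha := hyp_last_one_le hx
    obtain ⟨hx1, hxpos⟩ := hx
    unfold mink at hx1
    set a := x (Fin.last k) with haa
    have hsum : ∑ i : Fin k, x i.castSucc ^ 2 = a^2 - 1 := by
      have h0 : ∑ i : Fin k, x i.castSucc * x i.castSucc = a * a - 1 := by linarith
      rw [show a^2 - 1 = a * a - 1 by ring, ← h0]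
      exact Finset.sum_congr rfl fun i _ => sq (x i.castSucc)
    by_cases hr0 : ∑ i : Fin k, x i.castSucc ^ 2 = 0
    · refine ⟨ePoint k, Finset.mem_insert_self _ _, ?_⟩
      rw [mink_ePoint, neg_neg]
      have ha1 : a = 1 := by nlinarith
      rw [← haa, ha1]; norm_num
    · have hrpos : 0 < ∑ i : Fin k, x i.castSucc ^ 2 :=
        lt_of_le_of_ne (Finset.sum_nonneg fun i _ => sq_nonneg _) (Ne.symm hr0)
      set r := Real.sqrt (∑ i : Fin k, x i.castSucc ^ 2) with hrr
      have hr : 0 < r := Real.sqrt_pos.mpr hrpos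
      have hr2 : r^2 = a^2 - 1 := by
        rw [hrr, Real.sq_sqrt hrpos.le, hsum]
      set v : Fin k → ℝ := fun i => x i.castSucc / r with hv
      have hvSp : v ∈ Sp := by
        show ∑ i, v i ^2 = 1
        have : ∀ i : Fin k, v i ^2 = x i.castSucc ^2 / r^2 := fun i => by
          rw [hv]; ring
        rw [Finset.sum_congr rfl fun i _ => this i, ← Finset.sum_div,
          Real.sq_sqrt hrpos.le, div_self hr0]
      obtain ⟨ω, hωmem⟩ := Set.mem_iUnion.mp (ht hvSp)
      obtain ⟨hωt, hvU⟩ := Set.mem_iUnion.mp hωmem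
      have hω2 : ∑ i, (ω : Fin k → ℝ) i ^2 = 1 := ω.2
      have hvU' : ∑ i, (v i - (ω : Fin k → ℝ) i)^2 < 1/4 := hvU
      have hdot : (7:ℝ)/8 ≤ ∑ i, v i * (ω : Fin k → ℝ) i := by
        have hexp : ∑ i, (v i - (ω : Fin k → ℝ) i)^2
            = (∑ i, v i ^2) + (∑ i, (ω : Fin k → ℝ) i ^2)
              - 2 * ∑ i, v i * (ω : Fin k → ℝ) i := by
          rw [Finset.mul_sum, ← Finset.sum_add_distrib, ← Finset.sum_sub_distrib]
          exact Finset.sum_congr rfl fun i _ => by ring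
        rw [hexp, hvSp, hω2] at hvU'
        linarith
      refine ⟨Fin.snoc (ω : Fin k → ℝ) (Real.sqrt 2), ?_, ?_⟩
      · exact Finset.mem_insert_of_mem (Finset.mem_image_of_mem _ hωt)
      · unfold mink
        simp only [Fin.snoc_castSucc, Fin.snoc_last]
        have hxv : ∀ i : Fin k, x i.castSucc = r * v i := fun i => by
          rw [hv]; field_simp
        have hsum2 : ∑ i : Fin k, x i.castSucc * (ω : Fin k → ℝ) i
            = r * ∑ i, v i * (ω : Fin k → ℝ) i := by
          rw [Finset.mul_sum]
          exact Finset.sum_congr rfl fun i _ => by rw [hxv i]; ring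
        rw [hsum2]
        have hra : a - 1 ≤ r := by
          have h1 : Real.sqrt ((a-1)^2) ≤ r := by
            rw [hrr]; exact Real.sqrt_le_sqrt (by nlinarith)
          rwa [Real.sqrt_sq (by linarith)] at h1
        have hs2 : Real.sqrt 2 ≤ 13/8 := by
          nlinarith [Real.sq_sqrt (show (0:ℝ) ≤ 2 by norm_num), Real.sqrt_nonneg 2]
        have hD : r * (7/8) ≤ r * ∑ i, v i * (ω : Fin k → ℝ) i :=
          mul_le_mul_of_nonneg_left hdot hr.le
        have hs2a : a * Real.sqrt 2 ≤ a * (13/8) := mul_le_mul_of_nonneg_left hs2 (by linarith)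
        nlinarith

lemma hypDist_eq_phi {k : ℕ} (x y : Fin (k+1) → ℝ) : hypDist x y = phi (-(mink x y)) := rfl

lemma mink_add_smul_left {k : ℕ} (x u y : Fin (k + 1) → ℝ) (r : ℝ) :
    mink (x + r • u) y = mink x y + r * mink u y := by
  rw [show x + r • u = x - (-r) • u by simp, mink_sub_smul_left]; ring

lemma mink_add_smul_right {k : ℕ} (x u y : Fin (k + 1) → ℝ) (r : ℝ) :
    mink y (x + r • u) = mink y x + r * mink y u := by
  rw [mink_symm, mink_add_smul_left, mink_symm x y, mink_symm u y]

lemma mink_sub_right {k : ℕ} (x a b : Fin (k+1) → ℝ) :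
    mink x (a - b) = mink x a - mink x b := by
  rw [show a - b = a - (1:ℝ) • b by simp, mink_symm, mink_sub_smul_left,
    mink_symm a x, mink_symm b x]; ring

lemma mink_sub_smul_right' {k : ℕ} (x u y : Fin (k + 1) → ℝ) (r : ℝ) :
    mink y (x - r • u) = mink y x - r * mink y u := by
  rw [mink_symm, mink_sub_smul_left, mink_symm x y, mink_symm u y]

lemma mink_sub_sub {k : ℕ} (a b : Fin (k+1) → ℝ) :
    mink (a - b) (a - b) = mink a a - 2 * mink a b + mink b b := by
  rw [show a - b = a - (1:ℝ) • b by simp, mink_sub_smul_left, mink_sub_smul_right',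
    mink_sub_smul_right', mink_symm b a]
  ring

lemma mink_add_add {k : ℕ} (a b : Fin (k+1) → ℝ) :
    mink (a + b) (a + b) = mink a a + 2 * mink a b + mink b b := by
  rw [show a + b = a + (1:ℝ) • b by simp, mink_add_smul_left, mink_add_smul_right,
    mink_add_smul_right, mink_symm b a]
  ring

/-- The rearrangement inequality for the Fréchet-mean argument. -/
lemma rearrange {κ c : ℝ} (hκ : 0 < κ) (hc : 0 < c) {t1 t2 : ℝ} (h1 : 1 ≤ t1) (h2 : 1 ≤ t2) :
    phi t1 ^2 * (c * Real.exp (-κ*t1)) + phi t2 ^2 * (c * Real.exp (-κ*t2))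
      ≤ phi t2 ^2 * (c * Real.exp (-κ*t1)) + phi t1 ^2 * (c * Real.exp (-κ*t2)) ∧
    (phi t1 ^2 * (c * Real.exp (-κ*t1)) + phi t2 ^2 * (c * Real.exp (-κ*t2))
      = phi t2 ^2 * (c * Real.exp (-κ*t1)) + phi t1 ^2 * (c * Real.exp (-κ*t2)) → t1 = t2) := by
  have key : ∀ s1 s2 : ℝ, 1 ≤ s1 → 1 ≤ s2 → s1 ≤ s2 →
      phi s1 ^2 * (c * Real.exp (-κ*s1)) + phi s2 ^2 * (c * Real.exp (-κ*s2))
      ≤ phi s2 ^2 * (c * Real.exp (-κ*s1)) + phi s1 ^2 * (c * Real.exp (-κ*s2)) := by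
    intro s1 s2 hs1 hs2 hle
    have hphi : phi s1 ≤ phi s2 := phi_mono hs1 hle
    have hphi0 : 0 ≤ phi s1 := phi_nonneg hs1
    have hsq : phi s1 ^2 ≤ phi s2 ^2 := by nlinarith
    have hexp : Real.exp (-κ*s2) ≤ Real.exp (-κ*s1) := by
      apply Real.exp_le_exp.mpr; nlinarith
    nlinarith [mul_nonneg (sub_nonneg.mpr hsq) (sub_nonneg.mpr hexp)]
  constructor
  · rcases le_total t1 t2 with h | h
    · exact key t1 t2 h1 h2 h
    · have := key t2 t1 h2 h1 h
      linarith
  · intro heq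
    by_contra hne
    rcases lt_or_gt_of_ne hne with h | h
    · have hphi : phi t1 < phi t2 := phi_strictMono h1 h
      have hphi0 : 0 ≤ phi t1 := phi_nonneg h1
      have hsq : phi t1 ^2 < phi t2 ^2 := by nlinarith
      have hexp : Real.exp (-κ*t2) < Real.exp (-κ*t1) := by
        apply Real.exp_lt_exp.mpr; nlinarith
      have hexp0 : 0 < Real.exp (-κ*t2) := Real.exp_pos _
      nlinarith [mul_pos (sub_pos.mpr hsq) (sub_pos.mpr hexp)]
    · have hphi : phi t2 < phi t1 := phi_strictMono h2 h
      have hphi0 : 0 ≤ phi t2 := phi_nonneg h2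
      have hsq : phi t2 ^2 < phi t1 ^2 := by nlinarith
      have hexp : Real.exp (-κ*t1) < Real.exp (-κ*t2) := by
        apply Real.exp_lt_exp.mpr; nlinarith
      nlinarith [mul_pos (sub_pos.mpr hsq) (sub_pos.mpr hexp)]

lemma measurable_minkSelf {k : ℕ} : Measurable (fun x : Fin (k+1) → ℝ => mink x x) := by
  unfold mink
  refine Measurable.sub ?_ ?_
  · exact Finset.measurable_sum _ fun i _ =>
      (measurable_pi_apply _).mul (measurable_pi_apply _)
  · exact (measurable_pi_apply _).mul (measurable_pi_apply _)

lemma measurableSet_hyperboloid (k : ℕ) : MeasurableSet (hyperboloid k) := by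
  have h1 : MeasurableSet {x : Fin (k+1) → ℝ | mink x x = -1} :=
    measurable_minkSelf (measurableSet_singleton (-1))
  have h2 : MeasurableSet {x : Fin (k+1) → ℝ | 0 < x (Fin.last k)} :=
    (measurable_pi_apply _) measurableSet_Ioi
  exact h1.inter h2

lemma measurable_hypDist {k : ℕ} (y : Fin (k+1) → ℝ) :
    Measurable (fun x : Fin (k+1) → ℝ => hypDist x y) := by
  unfold hypDist
  have hm : Measurable (fun x : Fin (k+1) → ℝ => -(mink x y)) := (measurable_mink y).neg
  exact Real.measurable_log.comp
    (hm.add (Real.continuous_sqrt.measurable.comp ((hm.pow_const 2).sub_const 1)))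

lemma measurable_densE {k : ℕ} (κ c : ℝ) (q : Fin (k+1) → ℝ) :
    Measurable (fun x : Fin (k+1) → ℝ => ENNReal.ofReal (c * Real.exp (κ * mink x q))) :=
  ENNReal.measurable_ofReal.comp
    ((Real.measurable_exp.comp ((measurable_mink q).const_mul κ)).const_mul c)

lemma norm_transfer {k : ℕ} (κ c : ℝ) {μ q : Fin (k+1) → ℝ} (hμ : μ ∈ hyperboloid k)
    (hq : q ∈ hyperboloid k) (vol : Measure (Fin (k+1) → ℝ))
    (hvol : ∀ g : (Fin (k + 1) → ℝ) → (Fin (k + 1) → ℝ), Measurable g →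
      (∀ x y, mink (g x) (g y) = mink x y) →
      Set.MapsTo g (hyperboloid k) (hyperboloid k) → vol.map g = vol) :
    ∫⁻ x, ENNReal.ofReal (c * Real.exp (κ * mink x q)) ∂vol
      = ∫⁻ x, ENNReal.ofReal (c * Real.exp (κ * mink x μ)) ∂vol := by
  by_cases hqe : q = μ
  · rw [hqe]
  · have hne : μ ≠ q := fun h => hqe h.symm
    have hmk : mink μ q < -1 := mink_lt_neg_one hμ hq hne
    have hv : 0 < mink (μ - q) (μ - q) := by
      rw [mink_sub_sub, hμ.1, hq.1]; linarith
    have hswap := mrefl_swap hμ.1 hq.1 (ne_of_lt hmk)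
    have hmap := hvol (mrefl (μ - q)) (measurable_mrefl _) (mrefl_mink hv.ne') (mrefl_mapsTo hv)
    conv_lhs => rw [← hmap]
    rw [lintegral_map (measurable_densE κ c q) (measurable_mrefl _)]
    refine lintegral_congr fun x => ?_
    congr 2
    rw [mrefl_adj, hswap.2]

lemma core_finite_e {k : ℕ} {κ c : ℝ} (hκ : 0 < κ) (hc : 0 < c)
    (vol : Measure (Fin (k+1) → ℝ)) (hsupp : vol (hyperboloid k)ᶜ = 0)
    (hnorm : ∀ q ∈ hyperboloid k,
      ∫⁻ x, ENNReal.ofReal (c * Real.exp (κ * mink x q)) ∂vol = 1)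
    {p' : Fin (k+1) → ℝ} (hp' : p' ∈ hyperboloid k) :
    ∫⁻ x, ENNReal.ofReal (hypDist x p' ^2 * (c * Real.exp (κ * mink x (ePoint k)))) ∂vol
      < ⊤ := by
  obtain ⟨Q, hQmem, hQ⟩ := net_exists k
  set C : ℝ := p' (Fin.last k) + Real.sqrt (∑ i : Fin k, p' i.castSucc ^2) with hC
  have hC1 : 1 ≤ C := by
    have := hyp_last_one_le hp'
    have := Real.sqrt_nonneg (∑ i : Fin k, p' i.castSucc ^2)
    rw [hC]; linarith
  set M : ℝ := 256 * C^2 * Real.exp (2*κ) / κ^2 with hM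
  have hM0 : 0 ≤ M := by positivity
  have hptwise : ∀ x ∈ hyperboloid k,
      hypDist x p' ^2 * (c * Real.exp (κ * mink x (ePoint k)))
        ≤ M * ∑ q ∈ Q, c * Real.exp (κ * mink x q) := by
    intro x hx
    set t := x (Fin.last k) with htdef
    have ht : 1 ≤ t := hyp_last_one_le hx
    have ht' : 1 ≤ -(mink x p') := by
      have := mink_le_neg_one hx hp'; linarith
    obtain ⟨q, hqQ, hq⟩ := hQ x hx
    -- bound -(mink x p') ≤ C * t
    have hx2 : ∑ i : Fin k, x i.castSucc ^2 = t^2 - 1 := by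
      have h1 := hx.1
      unfold mink at h1
      have h0 : ∑ i : Fin k, x i.castSucc * x i.castSucc = t * t - 1 := by linarith
      rw [show t^2 - 1 = t * t - 1 by ring, ← h0]
      exact Finset.sum_congr rfl fun i _ => sq (x i.castSucc)
    have hcs := Finset.sum_mul_sq_le_sq_mul_sq Finset.univ
      (fun i : Fin k => x i.castSucc) (fun i : Fin k => p' i.castSucc)
    set S := ∑ i : Fin k, x i.castSucc * p' i.castSucc with hSdef
    set sp := Real.sqrt (∑ i : Fin k, p' i.castSucc ^2) with hspdef
    have hsp0 : 0 ≤ sp := Real.sqrt_nonneg _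
    have hsp2 : sp^2 = ∑ i : Fin k, p' i.castSucc ^2 :=
      Real.sq_sqrt (Finset.sum_nonneg fun i _ => sq_nonneg _)
    have hS2 : S^2 ≤ (t^2 - 1) * sp^2 := by
      rw [hsp2, ← hx2]; exact hcs
    have htp : -(mink x p') ≤ C * t := by
      unfold mink
      rw [← hSdef]
      have ht0 : (0:ℝ) ≤ t := by linarith
      have hspt : 0 ≤ sp * t := mul_nonneg hsp0 ht0
      have hkey : -(sp * t) ≤ S := by
        nlinarith [hS2, hspt, sq_nonneg sp]
      rw [hC]
      nlinarith
    have hd0 : 0 ≤ hypDist x p' := by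
      rw [hypDist_eq_phi]; exact phi_nonneg ht'
    have hCt1 : 1 ≤ C * t := by nlinarith
    have hd : hypDist x p' ≤ 2*(C*t) := by
      rw [hypDist_eq_phi]
      exact (phi_mono ht' htp).trans (phi_le_two_mul hCt1)
    have hdsq : hypDist x p' ^2 ≤ 4*C^2*t^2 := by nlinarith
    have hminke : mink x (ePoint k) = -t := mink_ePoint x
    have hqb : -(mink x q) ≤ 3/4*t + 2 := hq
    -- analytic bound
    have hEexp := sq_div_four_le_exp (z := κ*t/4) (by positivity)
    have h1 : 4*C^2*t^2 ≤ 256*C^2/κ^2 * Real.exp (κ*t/4) := by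
      have h1' := mul_le_mul_of_nonneg_left hEexp (show (0:ℝ) ≤ 256*C^2 by positivity)
      rw [div_mul_eq_mul_div, le_div_iff₀ (by positivity : (0:ℝ) < κ^2)]
      calc 4*C^2*t^2*κ^2 = 256*C^2*((κ*t/4/2)^2) := by ring
        _ ≤ 256*C^2*Real.exp (κ*t/4) := h1'
    have hEsplit : Real.exp (κ*t/4) * Real.exp (κ * (-t)) = Real.exp (-(3*(κ*t)/4)) := by
      rw [← Real.exp_add]; ring_nf
    have hq2 : Real.exp (-(3*(κ*t)/4)) ≤ Real.exp (2*κ) * Real.exp (κ * mink x q) := by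
      rw [← Real.exp_add]
      apply Real.exp_le_exp.mpr
      have hmul := mul_le_mul_of_nonneg_left hqb hκ.le
      linarith
    have hsum : c * Real.exp (κ * mink x q) ≤ ∑ q' ∈ Q, c * Real.exp (κ * mink x q') :=
      Finset.single_le_sum (f := fun q' => c * Real.exp (κ * mink x q'))
        (fun q' _ => by positivity) hqQ
    calc hypDist x p' ^2 * (c * Real.exp (κ * mink x (ePoint k)))
        = hypDist x p' ^2 * (c * Real.exp (κ * (-t))) := by rw [hminke]
      _ ≤ (4*C^2*t^2) * (c * Real.exp (κ * (-t))) :=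
          mul_le_mul_of_nonneg_right hdsq (by positivity)
      _ ≤ (256*C^2/κ^2 * Real.exp (κ*t/4)) * (c * Real.exp (κ * (-t))) :=
          mul_le_mul_of_nonneg_right h1 (by positivity)
      _ = (c * (256*C^2/κ^2)) * (Real.exp (κ*t/4) * Real.exp (κ * (-t))) := by ring
      _ = (c * (256*C^2/κ^2)) * Real.exp (-(3*(κ*t)/4)) := by rw [hEsplit]
      _ ≤ (c * (256*C^2/κ^2)) * (Real.exp (2*κ) * Real.exp (κ * mink x q)) :=
          mul_le_mul_of_nonneg_left hq2 (by positivity)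
      _ = M * (c * Real.exp (κ * mink x q)) := by rw [hM]; ring
      _ ≤ M * ∑ q' ∈ Q, c * Real.exp (κ * mink x q') :=
          mul_le_mul_of_nonneg_left hsum hM0
  have hae : ∀ᵐ x ∂vol, x ∈ hyperboloid k := by
    rw [MeasureTheory.ae_iff]
    exact hsupp
  have hmono : ∫⁻ x, ENNReal.ofReal (hypDist x p' ^2 * (c * Real.exp (κ * mink x (ePoint k)))) ∂vol
      ≤ ∫⁻ x, ENNReal.ofReal (M * ∑ q ∈ Q, c * Real.exp (κ * mink x q)) ∂vol := by
    refine lintegral_mono_ae ?_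
    filter_upwards [hae] with x hx
    exact ENNReal.ofReal_le_ofReal (hptwise x hx)
  have hRHS : ∫⁻ x, ENNReal.ofReal (M * ∑ q ∈ Q, c * Real.exp (κ * mink x q)) ∂vol
      = ENNReal.ofReal M * ∑ q ∈ Q, 1 := by
    have hstep : ∀ x, ENNReal.ofReal (M * ∑ q ∈ Q, c * Real.exp (κ * mink x q))
        = ENNReal.ofReal M * ∑ q ∈ Q, ENNReal.ofReal (c * Real.exp (κ * mink x q)) := by
      intro x
      rw [ENNReal.ofReal_mul hM0, ENNReal.ofReal_sum_of_nonneg (fun q _ => by positivity)]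
    rw [lintegral_congr hstep,
      lintegral_const_mul _ (Finset.measurable_sum _ fun q _ => measurable_densE κ c q),
      lintegral_finset_sum _ fun q _ => measurable_densE κ c q]
    congr 1
    exact Finset.sum_congr rfl fun q hqQ => hnorm q (hQmem q hqQ)
  refine lt_of_le_of_lt (hmono.trans hRHS.le) ?_
  simp only [Finset.sum_const, nsmul_eq_mul, mul_one]
  exact ENNReal.mul_lt_top ENNReal.ofReal_lt_top (ENNReal.natCast_lt_top _)

lemma measurable_coreInt {k : ℕ} (κ c : ℝ) (p' q : Fin (k+1) → ℝ) :
    Measurable (fun x : Fin (k+1) → ℝ =>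
      ENNReal.ofReal (hypDist x p' ^2 * (c * Real.exp (κ * mink x q)))) :=
  ENNReal.measurable_ofReal.comp (((measurable_hypDist p').pow_const 2).mul
    ((Real.measurable_exp.comp ((measurable_mink q).const_mul κ)).const_mul c))

lemma core_finite {k : ℕ} {κ c : ℝ} (hκ : 0 < κ) (hc : 0 < c)
    {μ : Fin (k+1) → ℝ} (hμ : μ ∈ hyperboloid k)
    (vol : Measure (Fin (k+1) → ℝ)) (hsupp : vol (hyperboloid k)ᶜ = 0)
    (hvol : ∀ g : (Fin (k + 1) → ℝ) → (Fin (k + 1) → ℝ), Measurable g →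
      (∀ x y, mink (g x) (g y) = mink x y) →
      Set.MapsTo g (hyperboloid k) (hyperboloid k) → vol.map g = vol)
    (hnorm : ∫⁻ x, ENNReal.ofReal (c * Real.exp (κ * mink x μ)) ∂vol = 1)
    {p' : Fin (k+1) → ℝ} (hp' : p' ∈ hyperboloid k) :
    ∫⁻ x, ENNReal.ofReal (hypDist x p' ^2 * (c * Real.exp (κ * mink x μ))) ∂vol < ⊤ := by
  have hnorm' : ∀ q ∈ hyperboloid k,
      ∫⁻ x, ENNReal.ofReal (c * Real.exp (κ * mink x q)) ∂vol = 1 := fun q hq =>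
    (norm_transfer κ c hμ hq vol hvol).trans hnorm
  by_cases hμe : μ = ePoint k
  · rw [hμe]
    exact core_finite_e hκ hc vol hsupp hnorm' hp'
  · have he := ePoint_mem k
    have hmk : mink μ (ePoint k) < -1 := mink_lt_neg_one hμ he hμe
    have hv : 0 < mink (μ - ePoint k) (μ - ePoint k) := by
      rw [mink_sub_sub, hμ.1, he.1]; linarith
    have hswap := mrefl_swap hμ.1 he.1 (ne_of_lt hmk)
    set R0 := mrefl (μ - ePoint k) with hR0
    have hmap := hvol R0 (measurable_mrefl _) (mrefl_mink hv.ne') (mrefl_mapsTo hv)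
    have heq : ∫⁻ x, ENNReal.ofReal (hypDist x p' ^2 * (c * Real.exp (κ * mink x μ))) ∂vol
        = ∫⁻ x, ENNReal.ofReal
            (hypDist x (R0 p') ^2 * (c * Real.exp (κ * mink x (ePoint k)))) ∂vol := by
      conv_lhs => rw [← hmap]
      rw [lintegral_map (measurable_coreInt κ c p' μ) (measurable_mrefl _)]
      refine lintegral_congr fun x => ?_
      congr 2
      · rw [hypDist_eq_phi, hypDist_eq_phi, mrefl_adj]
      · rw [mrefl_adj, ← hR0, hswap.1]
    rw [heq]
    exact core_finite_e hκ hc vol hsupp hnorm' (mrefl_mapsTo hv hp')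

/-- The location parameter `μ` is the unique Fréchet mean of the hyperboloid
(hyperbolic von Mises–Fisher) distribution, with density proportional to
`exp(κ(x,μ))` with respect to the invariant volume measure on `H^k`. -/
theorem hyperboloid_frechetMean (k : ℕ) (κ : ℝ) (hκ : 0 < κ)
    (μ : Fin (k + 1) → ℝ) (hμ : μ ∈ hyperboloid k)
    (vol : Measure (Fin (k + 1) → ℝ))
    (hsupp : vol (hyperboloid k)ᶜ = 0)
    (hvol : ∀ g : (Fin (k + 1) → ℝ) → (Fin (k + 1) → ℝ), Measurable g →
      (∀ x y, mink (g x) (g y) = mink x y) →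
      Set.MapsTo g (hyperboloid k) (hyperboloid k) → vol.map g = vol)
    (c : ℝ) (hc : 0 < c)
    (P : Measure (Fin (k + 1) → ℝ))
    (hP : P = vol.withDensity (fun x => ENNReal.ofReal (c * Real.exp (κ * mink x μ))))
    (hProb : IsProbabilityMeasure P) :
    ∀ p ∈ hyperboloid k, p ≠ μ →
      ∫ x, hypDist x μ ^ 2 ∂P < ∫ x, hypDist x p ^ 2 ∂P := by
  intro p hp hne
  classical
  set F : (Fin (k+1) → ℝ) → ℝ := fun x => hypDist x μ ^ 2 with hF
  set G : (Fin (k+1) → ℝ) → ℝ := fun x => hypDist x p ^ 2 with hG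
  set f : (Fin (k+1) → ℝ) → ℝ := fun x => c * Real.exp (κ * mink x μ) with hf
  set f' : (Fin (k+1) → ℝ) → ℝ := fun x => c * Real.exp (κ * mink x p) with hf'
  have hFm : Measurable F := (measurable_hypDist μ).pow_const 2
  have hGm : Measurable G := (measurable_hypDist p).pow_const 2
  have hfm : Measurable f :=
    (Real.measurable_exp.comp ((measurable_mink μ).const_mul κ)).const_mul c
  have hf'm : Measurable f' :=
    (Real.measurable_exp.comp ((measurable_mink p).const_mul κ)).const_mul c
  have hF0 : ∀ x, 0 ≤ F x := fun x => sq_nonneg _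
  have hG0 : ∀ x, 0 ≤ G x := fun x => sq_nonneg _
  have hfpos : ∀ x, 0 < f x := fun x => mul_pos hc (Real.exp_pos _)
  have hf'pos : ∀ x, 0 < f' x := fun x => mul_pos hc (Real.exp_pos _)
  have hΦ1m : Measurable (fun x => ENNReal.ofReal (F x * f x)) :=
    ENNReal.measurable_ofReal.comp (hFm.mul hfm)
  have hΦ2m : Measurable (fun x => ENNReal.ofReal (G x * f x)) :=
    ENNReal.measurable_ofReal.comp (hGm.mul hfm)
  have hΦ3m : Measurable (fun x => ENNReal.ofReal (F x * f' x)) :=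
    ENNReal.measurable_ofReal.comp (hFm.mul hf'm)
  have hΦ4m : Measurable (fun x => ENNReal.ofReal (G x * f' x)) :=
    ENNReal.measurable_ofReal.comp (hGm.mul hf'm)
  have hdm : Measurable (fun x => ENNReal.ofReal (f x)) := ENNReal.measurable_ofReal.comp hfm
  have hPuniv : P Set.univ = 1 := hProb.measure_univ
  have hnorm : ∫⁻ x, ENNReal.ofReal (f x) ∂vol = 1 := by
    rw [hP] at hPuniv
    rwa [withDensity_apply _ MeasurableSet.univ, Measure.restrict_univ] at hPuniv
  -- geometry of the reflection swapping μ and p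
  have hμp : mink μ p < -1 := mink_lt_neg_one hμ hp (Ne.symm hne)
  set v : Fin (k+1) → ℝ := μ - p with hv
  have hvv : 0 < mink v v := by rw [hv, mink_sub_sub, hμ.1, hp.1]; linarith
  have hswap := mrefl_swap hμ.1 hp.1 (ne_of_lt hμp)
  set R := mrefl v with hR
  have hRm : Measurable R := measurable_mrefl v
  have hRmap : vol.map R = vol := hvol R hRm (mrefl_mink hvv.ne') (mrefl_mapsTo hvv)
  have hinv : ∀ Ψ : (Fin (k+1) → ℝ) → ENNReal, Measurable Ψ →
      ∫⁻ x, Ψ (R x) ∂vol = ∫⁻ x, Ψ x ∂vol := by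
    intro Ψ hΨ
    conv_rhs => rw [← hRmap]
    rw [lintegral_map hΨ hRm]
  have hFR : ∀ x, F (R x) = G x := by
    intro x
    simp only [hF, hG, hypDist_eq_phi]
    rw [hR, mrefl_adj, ← hR, hswap.1]
  have hGR : ∀ x, G (R x) = F x := by
    intro x
    simp only [hF, hG, hypDist_eq_phi]
    rw [hR, mrefl_adj, ← hR, hswap.2]
  have hfR : ∀ x, f (R x) = f' x := by
    intro x
    simp only [hf, hf']
    rw [hR, mrefl_adj, ← hR, hswap.1]
  have hI41 : ∫⁻ x, ENNReal.ofReal (G x * f' x) ∂vol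
      = ∫⁻ x, ENNReal.ofReal (F x * f x) ∂vol := by
    rw [← hinv _ hΦ1m]
    exact lintegral_congr fun x => by rw [hFR x, hfR x]
  have hI32 : ∫⁻ x, ENNReal.ofReal (F x * f' x) ∂vol
      = ∫⁻ x, ENNReal.ofReal (G x * f x) ∂vol := by
    rw [← hinv _ hΦ2m]
    exact lintegral_congr fun x => by rw [hGR x, hfR x]
  have hAfin : ∫⁻ x, ENNReal.ofReal (F x * f x) ∂vol ≠ ⊤ :=
    (core_finite hκ hc hμ vol hsupp hvol hnorm hμ).ne
  have hBfin : ∫⁻ x, ENNReal.ofReal (G x * f x) ∂vol ≠ ⊤ :=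
    (core_finite hκ hc hμ vol hsupp hvol hnorm hp).ne
  have hae : ∀ᵐ x ∂vol, x ∈ hyperboloid k := by
    rw [MeasureTheory.ae_iff]; exact hsupp
  -- pointwise rearrangement
  have hpt : ∀ x ∈ hyperboloid k,
      F x * f x + G x * f' x ≤ G x * f x + F x * f' x ∧
      (F x * f x + G x * f' x = G x * f x + F x * f' x → mink x μ = mink x p) := by
    intro x hx
    have h1 : 1 ≤ -(mink x μ) := by have := mink_le_neg_one hx hμ; linarith
    have h2 : 1 ≤ -(mink x p) := by have := mink_le_neg_one hx hp; linarith
    have hr := rearrange hκ hc h1 h2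
    have e1 : Real.exp (-κ * -(mink x μ)) = Real.exp (κ * mink x μ) := by ring_nf
    have e2 : Real.exp (-κ * -(mink x p)) = Real.exp (κ * mink x p) := by ring_nf
    rw [e1, e2] at hr
    simp only [hF, hG, hf, hf', hypDist_eq_phi]
    refine ⟨hr.1, fun heq => ?_⟩
    have := hr.2 heq
    linarith
  -- the key strict inequality between lintegrals
  have hlt : ∫⁻ x, ENNReal.ofReal (F x * f x) ∂vol
      < ∫⁻ x, ENNReal.ofReal (G x * f x) ∂vol := by
    rcases lt_or_ge (∫⁻ x, ENNReal.ofReal (F x * f x) ∂vol)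
      (∫⁻ x, ENNReal.ofReal (G x * f x) ∂vol) with h | hcon
    · exact h
    exfalso
    have hle_ae : (fun x => ENNReal.ofReal (F x * f x) + ENNReal.ofReal (G x * f' x)) ≤ᵐ[vol]
        (fun x => ENNReal.ofReal (G x * f x) + ENNReal.ofReal (F x * f' x)) := by
      filter_upwards [hae] with x hx
      calc ENNReal.ofReal (F x * f x) + ENNReal.ofReal (G x * f' x)
          = ENNReal.ofReal (F x * f x + G x * f' x) :=
            (ENNReal.ofReal_add (mul_nonneg (hF0 x) (hfpos x).le)
              (mul_nonneg (hG0 x) (hf'pos x).le)).symm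
        _ ≤ ENNReal.ofReal (G x * f x + F x * f' x) :=
            ENNReal.ofReal_le_ofReal (hpt x hx).1
        _ = ENNReal.ofReal (G x * f x) + ENNReal.ofReal (F x * f' x) :=
            ENNReal.ofReal_add (mul_nonneg (hG0 x) (hfpos x).le)
              (mul_nonneg (hF0 x) (hf'pos x).le)
    have hsum1 : ∫⁻ x, (ENNReal.ofReal (F x * f x) + ENNReal.ofReal (G x * f' x)) ∂vol
        = ∫⁻ x, ENNReal.ofReal (F x * f x) ∂vol + ∫⁻ x, ENNReal.ofReal (G x * f' x) ∂vol :=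
      lintegral_add_left hΦ1m _
    have hsum2 : ∫⁻ x, (ENNReal.ofReal (G x * f x) + ENNReal.ofReal (F x * f' x)) ∂vol
        = ∫⁻ x, ENNReal.ofReal (G x * f x) ∂vol + ∫⁻ x, ENNReal.ofReal (F x * f' x) ∂vol :=
      lintegral_add_left hΦ2m _
    have hgle : ∫⁻ x, (ENNReal.ofReal (G x * f x) + ENNReal.ofReal (F x * f' x)) ∂vol
        ≤ ∫⁻ x, (ENNReal.ofReal (F x * f x) + ENNReal.ofReal (G x * f' x)) ∂vol := by
      rw [hsum1, hsum2, hI41, hI32]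
      exact add_le_add hcon hcon
    have hfin : ∫⁻ x, (ENNReal.ofReal (F x * f x) + ENNReal.ofReal (G x * f' x)) ∂vol ≠ ⊤ := by
      rw [hsum1, hI41]
      exact ENNReal.add_ne_top.mpr ⟨hAfin, hAfin⟩
    have heqae := ae_eq_of_ae_le_of_lintegral_le hle_ae hfin
      ((hΦ2m.add hΦ3m).aemeasurable) hgle
    have hnull : vol {x | x ∈ hyperboloid k ∧ mink x μ ≠ mink x p} = 0 := by
      have h5 : ∀ᵐ x ∂vol, ¬(x ∈ hyperboloid k ∧ mink x μ ≠ mink x p) := by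
        filter_upwards [heqae, hae] with x hx hxH
        rintro ⟨hxH', hne'⟩
        have h6 : F x * f x + G x * f' x = G x * f x + F x * f' x := by
          have h7 : ENNReal.ofReal (F x * f x + G x * f' x)
              = ENNReal.ofReal (G x * f x + F x * f' x) := by
            rw [ENNReal.ofReal_add (mul_nonneg (hF0 x) (hfpos x).le)
              (mul_nonneg (hG0 x) (hf'pos x).le),
              ENNReal.ofReal_add (mul_nonneg (hG0 x) (hfpos x).le)
              (mul_nonneg (hF0 x) (hf'pos x).le)]
            exact hx
          exact (ENNReal.ofReal_eq_ofReal_iff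
            (by positivity) (by positivity)).mp h7
        exact hne' ((hpt x hxH').2 h6)
      rw [MeasureTheory.ae_iff] at h5
      simpa using h5
    -- reflection in u := v + s•w moves the bisector off itself
    set w : Fin (k+1) → ℝ := μ + p with hw
    have hww : mink w w = -2 + 2*mink μ p := by rw [hw, mink_add_add, hμ.1, hp.1]; ring
    have hW : 0 < -(mink w w) := by rw [hww]; linarith
    have hvw : mink v w = 0 := by
      rw [hv, hw, show μ - p = μ - (1:ℝ)•p by simp, mink_sub_smul_left,
        show μ + p = μ + (1:ℝ)•p by simp, mink_add_smul_right, mink_add_smul_right,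
        mink_symm p μ, hμ.1, hp.1]
      ring
    set s : ℝ := Real.sqrt (mink v v / (2 * -(mink w w))) with hs
    have hspos : 0 < s := Real.sqrt_pos.mpr (by positivity)
    have hs2 : s^2 = mink v v / (2 * -(mink w w)) := Real.sq_sqrt (by positivity)
    set u : Fin (k+1) → ℝ := v + s • w with hu
    have huv : mink u v = mink v v := by
      rw [hu, mink_add_smul_left, mink_symm w v, hvw]; ring
    have huu : mink u u = mink v v / 2 := by
      rw [hu, mink_add_smul_right, mink_add_smul_left, mink_add_smul_left, hvw,
        mink_symm w v, hvw]
      have hsw : s^2 * mink w w = -(mink v v)/2 := by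
        have hww0 : mink w w ≠ 0 := by linarith
        rw [hs2]; field_simp
      nlinarith [hsw]
    have huu_pos : 0 < mink u u := by rw [huu]; linarith
    have hSmap : vol.map (mrefl u) = vol :=
      hvol _ (measurable_mrefl u) (mrefl_mink huu_pos.ne') (mrefl_mapsTo huu_pos)
    have hBcm : MeasurableSet {x | x ∈ hyperboloid k ∧ mink x μ ≠ mink x p} := by
      have h1 : MeasurableSet {x : Fin (k+1) → ℝ | mink x μ - mink x p = 0} :=
        ((measurable_mink μ).sub (measurable_mink p)) (measurableSet_singleton 0)
      have h2 : {x : Fin (k+1) → ℝ | x ∈ hyperboloid k ∧ mink x μ ≠ mink x p}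
          = hyperboloid k ∩ {x | mink x μ - mink x p = 0}ᶜ := by
        ext x
        simp only [Set.mem_setOf_eq, Set.mem_inter_iff, Set.mem_compl_iff]
        constructor
        · rintro ⟨hxH, hne'⟩; exact ⟨hxH, fun h => hne' (by linarith)⟩
        · rintro ⟨hxH, hne'⟩; exact ⟨hxH, fun h => hne' (by rw [h]; ring)⟩
      rw [h2]
      exact (measurableSet_hyperboloid k).inter h1.compl
    have hkey : ∀ y, y ∈ hyperboloid k → mink y μ = mink y p →
        (mrefl u y ∈ hyperboloid k ∧ mink (mrefl u y) μ ≠ mink (mrefl u y) p) := by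
      intro y hy hyeq
      refine ⟨mrefl_mapsTo huu_pos hy, ?_⟩
      have hyv : mink y v = 0 := by rw [hv, mink_sub_right]; linarith
      have hyw : mink y w ≤ -2 := by
        have h1 := mink_le_neg_one hy hμ
        have h2 := mink_le_neg_one hy hp
        rw [hw, show μ + p = μ + (1:ℝ)•p by simp, mink_add_smul_right]
        linarith
      have hyu : mink y u = s * mink y w := by
        rw [hu, mink_add_smul_right, hyv]; ring
      intro heq'
      have h7 : mink (mrefl u y) v = 0 := by
        rw [hv, mink_sub_right]; linarith
      rw [mrefl_adj] at h7
      unfold mrefl at h7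
      rw [mink_sub_smul_right', hyv, hyu, mink_symm v u, huv, huu] at h7
      have hvv0 : mink v v ≠ 0 := ne_of_gt hvv
      have h8 : mink y w < 0 := by linarith
      rw [zero_sub] at h7
      have h9 : 2 * mink v v / (mink v v / 2) = 4 := by field_simp; ring
      rw [h9] at h7
      nlinarith [h7, hspos, h8]
    have hBi0 : vol {x | x ∈ hyperboloid k ∧ mink x μ = mink x p} = 0 := by
      have hsubset : {x | x ∈ hyperboloid k ∧ mink x μ = mink x p}
          ⊆ (mrefl u) ⁻¹' {x | x ∈ hyperboloid k ∧ mink x μ ≠ mink x p} :=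
        fun y hy => hkey y hy.1 hy.2
      have hle := measure_mono (μ := vol) hsubset
      rwa [← Measure.map_apply (measurable_mrefl u) hBcm, hSmap, hnull,
        nonpos_iff_eq_zero] at hle
    have huniv : vol Set.univ = 0 := by
      have hsub : (Set.univ : Set (Fin (k+1) → ℝ)) ⊆ (hyperboloid k)ᶜ ∪
          ({x | x ∈ hyperboloid k ∧ mink x μ = mink x p} ∪
           {x | x ∈ hyperboloid k ∧ mink x μ ≠ mink x p}) := by
        intro x _
        by_cases hxH : x ∈ hyperboloid k
        · by_cases hxe : mink x μ = mink x p
          · exact Or.inr (Or.inl ⟨hxH, hxe⟩)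
          · exact Or.inr (Or.inr ⟨hxH, hxe⟩)
        · exact Or.inl hxH
      refine le_antisymm ?_ zero_le
      refine le_trans (measure_mono hsub) ?_
      refine le_trans (measure_union_le _ _) ?_
      rw [hsupp, zero_add]
      refine le_trans (measure_union_le _ _) ?_
      rw [hBi0, hnull, add_zero]
    have hvol0 : vol = 0 := MeasureTheory.Measure.measure_univ_eq_zero.mp huniv
    rw [hvol0] at hnorm
    simp at hnorm
  -- convert Bochner integrals to lintegrals and conclude
  have hFP : ∫ x, F x ∂P = (∫⁻ x, ENNReal.ofReal (F x * f x) ∂vol).toReal := by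
    rw [integral_eq_lintegral_of_nonneg_ae (Filter.Eventually.of_forall hF0)
      hFm.aestronglyMeasurable]
    congr 1
    rw [hP, lintegral_withDensity_eq_lintegral_mul vol hdm
      (show Measurable fun x => ENNReal.ofReal (F x) from ENNReal.measurable_ofReal.comp hFm)]
    refine lintegral_congr fun x => ?_
    simp only [Pi.mul_apply]
    rw [← ENNReal.ofReal_mul (hfpos x).le, mul_comm]
  have hGP : ∫ x, G x ∂P = (∫⁻ x, ENNReal.ofReal (G x * f x) ∂vol).toReal := by
    rw [integral_eq_lintegral_of_nonneg_ae (Filter.Eventually.of_forall hG0)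
      hGm.aestronglyMeasurable]
    congr 1
    rw [hP, lintegral_withDensity_eq_lintegral_mul vol hdm
      (show Measurable fun x => ENNReal.ofReal (G x) from ENNReal.measurable_ofReal.comp hGm)]
    refine lintegral_congr fun x => ?_
    simp only [Pi.mul_apply]
    rw [← ENNReal.ofReal_mul (hfpos x).le, mul_comm]
  rw [hFP, hGP]
  exact (ENNReal.toReal_lt_toReal hAfin hBfin).mpr hlt
end
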